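/- Let Γ ≤ D_{n₁} × D_{n₂} × D_{n₃} be a 2-injective 3-factor subdirect product such that n_j > 2 for all j ∈ {1,2,3} and nᵢ ∉ {1,2,4} for some i ∈ {1,2,3}. Then every element of the kernel Hᵢ is a rotation, i.e., all its components are rotations. -/

import Mathlib

/-- `Γ ≤ G₁ × G₂ × G₃` is a (3-factor) subdirect product:
the projection to each factor is surjective on `Γ`. -/
def IsSubdirect3 {G₁ G₂ G₃ : Type*} [Group G₁] [Group G₂] [Group G₃]
    (Γ : Subgroup (G₁ × G₂ × G₃)) : Prop :=
  (∀ x : G₁, ∃ g ∈ Γ, g.1 = x) ∧ (∀ x : G₂, ∃ g ∈ Γ, g.2.1 = x) ∧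
    (∀ x : G₃, ∃ g ∈ Γ, g.2.2 = x)

/-- `Γ ≤ G₁ × G₂ × G₃` is 2-injective: for each `i`, the projection of `Γ` onto
the product of the two factors other than `Gᵢ` is injective on `Γ`. -/
def IsTwoInjective3 {G₁ G₂ G₃ : Type*} [Group G₁] [Group G₂] [Group G₃]
    (Γ : Subgroup (G₁ × G₂ × G₃)) : Prop :=
  (∀ g ∈ Γ, ∀ h ∈ Γ, g.2.1 = h.2.1 → g.2.2 = h.2.2 → g = h) ∧
  (∀ g ∈ Γ, ∀ h ∈ Γ, g.1 = h.1 → g.2.2 = h.2.2 → g = h) ∧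
  (∀ g ∈ Γ, ∀ h ∈ Γ, g.1 = h.1 → g.2.1 = h.2.1 → g = h)

open DihedralGroup in
/-- An element of `Dₙ` is a rotation if it lies in the cyclic subgroup of
rotations `{r i}`; the identity counts as a rotation. -/
def IsRotation {n : ℕ} (x : DihedralGroup n) : Prop := ∃ i, x = r i

open DihedralGroup in
/-- An element of `Dₙ` is a reflection if it is of the form `sr i`. -/
def IsReflection {n : ℕ} (x : DihedralGroup n) : Prop := ∃ i, x = sr i

/-- A subgroup of a product of three dihedral groups is a rotate-or-reflect group if every
element is either a rotation in all components or a reflection in all components. -/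
def IsRotateOrReflect3 {n₁ n₂ n₃ : ℕ}
    (Γ : Subgroup (DihedralGroup n₁ × DihedralGroup n₂ × DihedralGroup n₃)) : Prop :=
  ∀ g ∈ Γ, (IsRotation g.1 ∧ IsRotation g.2.1 ∧ IsRotation g.2.2) ∨
    (IsReflection g.1 ∧ IsReflection g.2.1 ∧ IsReflection g.2.2)

/-- A subgroup of a product of two dihedral groups is a rotate-or-reflect group if every
element is either a rotation in both components or a reflection in both components. -/
def IsRotateOrReflect2 {n₁ n₂ : ℕ}
    (Γ : Subgroup (DihedralGroup n₁ × DihedralGroup n₂)) : Prop :=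
  ∀ g ∈ Γ, (IsRotation g.1 ∧ IsRotation g.2) ∨ (IsReflection g.1 ∧ IsReflection g.2)

open DihedralGroup

private lemma aux_inv_r {n : ℕ} (i : ZMod n) : (r i)⁻¹ = r (-i) := rfl
private lemma aux_inv_sr {n : ℕ} (i : ZMod n) : (sr i)⁻¹ = sr i := rfl

private lemma key2 {m k l : ℕ} (hm : ¬ m ∣ 4) (hk : ¬ k ∣ 2)
    (P : DihedralGroup m × DihedralGroup k × DihedralGroup l → Prop)
    (hmul : ∀ a b, P a → P b → P (a * b)) (hinv : ∀ a, P a → P a⁻¹)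
    (hs1 : ∀ x, ∃ g, P g ∧ g.1 = x) (hs2 : ∀ x, ∃ g, P g ∧ g.2.1 = x)
    (inj23 : ∀ g, P g → g.2.1 = 1 → g.2.2 = 1 → g.1 = 1)
    (inj13 : ∀ g, P g → g.1 = 1 → g.2.2 = 1 → g.2.1 = 1)
    (inj12 : ∀ g, P g → g.1 = 1 → g.2.1 = 1 → g.2.2 = 1) :
    ∀ g, P g → g.1 = 1 → ∀ α, g.2.1 ≠ sr α := by
  rintro ⟨g1, g2, g3⟩ hg hg1 α hα
  dsimp at hg1 hα
  subst hg1; subst hα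
  cases g3 with
  | r δ =>
    have h2δ : δ + δ = 0 := by
      have hsq := hmul _ _ hg hg
      have h := inj12 _ hsq (by simp) (by simp [Prod.snd_mul, one_def, -r_zero])
      simp [Prod.snd_mul, one_def, -r_zero] at h
      linear_combination h
    obtain ⟨⟨γ1, γ2, γ3⟩, hγ, hγ2⟩ := hs2 (r 1)
    dsimp at hγ2; subst hγ2
    have hK := hmul _ _ (hmul _ _ (hmul _ _ hγ hg) (hinv _ hγ)) hg
    have h3 : (((γ1, r (1:ZMod k), γ3) * (1, sr α, r δ) * (γ1, r 1, γ3)⁻¹ * (1, sr α, r δ)).2.2 :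
        DihedralGroup l) = 1 := by
      cases γ3 with
      | r t =>
        simp [Prod.snd_mul, Prod.snd_inv, aux_inv_r, one_def, -r_zero]
        linear_combination h2δ
      | sr t =>
        simp [Prod.snd_mul, Prod.snd_inv, aux_inv_sr, one_def, -r_zero]
        try linear_combination h2δ
    have h2 := inj13 _ hK (by simp) h3
    simp [Prod.snd_mul, Prod.fst_mul, Prod.snd_inv, aux_inv_r, one_def, -r_zero] at h2
    have : ((2:ℕ) : ZMod k) = 0 := by push_cast; linear_combination h2
    exact hk ((ZMod.natCast_eq_zero_iff 2 k).mp this)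
  | sr β =>
    obtain ⟨⟨γ1, γ2, γ3⟩, hγ, hγ1⟩ := hs1 (r 1)
    dsimp at hγ1; subst hγ1
    have hE : ∃ E, P E ∧ E.1 = r 2 ∧ E.2.1 = 1 := by
      cases γ2 with
      | sr t =>
        refine ⟨_, hmul _ _ hγ hγ, ?_, ?_⟩
        · simp [Prod.fst_mul]; norm_num
        · simp [Prod.snd_mul, one_def, -r_zero]
      | r t =>
        obtain ⟨⟨δ1, δ2, δ3⟩, hδ, hδ2⟩ := hs2 (r t)
        dsimp at hδ2; subst hδ2
        refine ⟨_, hmul _ _ (hmul _ _ hγ hγ)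
          (hinv _ (hmul _ _ (hmul _ _ (hmul _ _ hδ hg) (hinv _ hδ)) hg)), ?_, ?_⟩
        · simp [Prod.fst_mul, Prod.fst_inv]; norm_num
        · simp [Prod.snd_mul, Prod.snd_inv, aux_inv_r, aux_inv_sr, one_def, -r_zero]
          try ring_nf
    obtain ⟨⟨E1, E2, E3⟩, hEP, hE1, hE21⟩ := hE
    dsimp at hE1 hE21; subst hE1; subst hE21
    have hc := hmul _ _ (hmul _ _ (hmul _ _ hEP hg) (hinv _ hEP)) hg
    have hcomm := inj12 _ hc
      (by simp [Prod.fst_mul, Prod.fst_inv, aux_inv_r, one_def, -r_zero])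
      (by simp [Prod.snd_mul, Prod.snd_inv, aux_inv_r, one_def, -r_zero])
    simp only [Prod.snd_mul, Prod.snd_inv] at hcomm
    have hz : E3 * E3 = 1 := by
      cases E3 with
      | r t =>
        simp [aux_inv_r, one_def, -r_zero] at hcomm ⊢
        linear_combination hcomm
      | sr t => simp [one_def, -r_zero]
    have h4 := inj23 _ (hmul _ _ hEP hEP)
      (by simp [Prod.snd_mul, one_def, -r_zero])
      (by simp only [Prod.snd_mul]; exact hz)
    simp [Prod.fst_mul, one_def, -r_zero] at h4
    have : ((4:ℕ) : ZMod m) = 0 := by push_cast; linear_combination h4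
    exact hm ((ZMod.natCast_eq_zero_iff 4 m).mp this)

private lemma rot_of_ne_sr {n : ℕ} (x : DihedralGroup n) (h : ∀ i, x ≠ sr i) : IsRotation x := by
  cases x with
  | r i => exact ⟨i, rfl⟩
  | sr i => exact absurd rfl (h i)

theorem statement_4 {n₁ n₂ n₃ : ℕ} (h₁ : 2 < n₁) (h₂ : 2 < n₂) (h₃ : 2 < n₃)
    (Γ : Subgroup (DihedralGroup n₁ × DihedralGroup n₂ × DihedralGroup n₃))
    (hsd : IsSubdirect3 Γ) (h2inj : IsTwoInjective3 Γ) :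
    (n₁ ∉ ({1, 2, 4} : Set ℕ) →
      ∀ g ∈ Γ, g.1 = 1 → IsRotation g.1 ∧ IsRotation g.2.1 ∧ IsRotation g.2.2) ∧
    (n₂ ∉ ({1, 2, 4} : Set ℕ) →
      ∀ g ∈ Γ, g.2.1 = 1 → IsRotation g.1 ∧ IsRotation g.2.1 ∧ IsRotation g.2.2) ∧
    (n₃ ∉ ({1, 2, 4} : Set ℕ) →
      ∀ g ∈ Γ, g.2.2 = 1 → IsRotation g.1 ∧ IsRotation g.2.1 ∧ IsRotation g.2.2) := by
  obtain ⟨S1, S2, S3⟩ := hsd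
  obtain ⟨I1, I2, I3⟩ := h2inj
  have L23 : ∀ g ∈ Γ, g.2.1 = 1 → g.2.2 = 1 → g.1 = 1 := by
    intro g hg ha hb; rw [I1 g hg 1 Γ.one_mem ha hb]; rfl
  have L13 : ∀ g ∈ Γ, g.1 = 1 → g.2.2 = 1 → g.2.1 = 1 := by
    intro g hg ha hb; rw [I2 g hg 1 Γ.one_mem ha hb]; rfl
  have L12 : ∀ g ∈ Γ, g.1 = 1 → g.2.1 = 1 → g.2.2 = 1 := by
    intro g hg ha hb; rw [I3 g hg 1 Γ.one_mem ha hb]; rfl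
  have d2 : ∀ {n : ℕ}, 2 < n → ¬ n ∣ 2 := by
    intro n h hd; have := Nat.le_of_dvd (by norm_num) hd; omega
  have d4 : ∀ {n : ℕ}, 2 < n → n ∉ ({1, 2, 4} : Set ℕ) → ¬ n ∣ 4 := by
    intro n h hn hd
    have h4 := Nat.le_of_dvd (by norm_num) hd
    have : n = 3 ∨ n = 4 := by omega
    rcases this with rfl | rfl
    · norm_num at hd
    · exact hn (by norm_num)
  refine ⟨?_, ?_, ?_⟩
  · intro hn g hg hg1
    refine ⟨⟨0, by rw [hg1]; rfl⟩, ?_, ?_⟩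
    · exact rot_of_ne_sr _ (key2 (d4 h₁ hn) (d2 h₂) (· ∈ Γ)
        (fun a b ha hb => Γ.mul_mem ha hb) (fun a ha => Γ.inv_mem ha) S1 S2
        L23 L13 L12 g hg hg1)
    · exact rot_of_ne_sr _ (key2 (d4 h₁ hn) (d2 h₃)
        (fun x : DihedralGroup n₁ × DihedralGroup n₃ × DihedralGroup n₂ =>
          (x.1, x.2.2, x.2.1) ∈ Γ)
        (fun a b ha hb => Γ.mul_mem ha hb) (fun a ha => Γ.inv_mem ha)
        (fun x => by obtain ⟨g, hg, e⟩ := S1 x; exact ⟨(g.1, g.2.2, g.2.1), hg, e⟩)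
        (fun x => by obtain ⟨g, hg, e⟩ := S3 x; exact ⟨(g.1, g.2.2, g.2.1), hg, e⟩)
        (fun g' hp ha hb => L23 _ hp hb ha)
        (fun g' hp ha hb => L12 _ hp ha hb)
        (fun g' hp ha hb => L13 _ hp ha hb)
        (g.1, g.2.2, g.2.1) hg hg1)
  · intro hn g hg hg21
    refine ⟨?_, ⟨0, by rw [hg21]; rfl⟩, ?_⟩
    · exact rot_of_ne_sr _ (key2 (d4 h₂ hn) (d2 h₁)
        (fun x : DihedralGroup n₂ × DihedralGroup n₁ × DihedralGroup n₃ =>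
          (x.2.1, x.1, x.2.2) ∈ Γ)
        (fun a b ha hb => Γ.mul_mem ha hb) (fun a ha => Γ.inv_mem ha)
        (fun x => by obtain ⟨g, hg, e⟩ := S2 x; exact ⟨(g.2.1, g.1, g.2.2), hg, e⟩)
        (fun x => by obtain ⟨g, hg, e⟩ := S1 x; exact ⟨(g.2.1, g.1, g.2.2), hg, e⟩)
        (fun g' hp ha hb => L13 _ hp ha hb)
        (fun g' hp ha hb => L23 _ hp ha hb)
        (fun g' hp ha hb => L12 _ hp hb ha)
        (g.2.1, g.1, g.2.2) hg hg21)
    · exact rot_of_ne_sr _ (key2 (d4 h₂ hn) (d2 h₃)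
        (fun x : DihedralGroup n₂ × DihedralGroup n₃ × DihedralGroup n₁ =>
          (x.2.2, x.1, x.2.1) ∈ Γ)
        (fun a b ha hb => Γ.mul_mem ha hb) (fun a ha => Γ.inv_mem ha)
        (fun x => by obtain ⟨g, hg, e⟩ := S2 x; exact ⟨(g.2.1, g.2.2, g.1), hg, e⟩)
        (fun x => by obtain ⟨g, hg, e⟩ := S3 x; exact ⟨(g.2.1, g.2.2, g.1), hg, e⟩)
        (fun g' hp ha hb => L13 _ hp hb ha)
        (fun g' hp ha hb => L12 _ hp hb ha)
        (fun g' hp ha hb => L23 _ hp ha hb)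
        (g.2.1, g.2.2, g.1) hg hg21)
  · intro hn g hg hg22
    refine ⟨?_, ?_, ⟨0, by rw [hg22]; rfl⟩⟩
    · exact rot_of_ne_sr _ (key2 (d4 h₃ hn) (d2 h₁)
        (fun x : DihedralGroup n₃ × DihedralGroup n₁ × DihedralGroup n₂ =>
          (x.2.1, x.2.2, x.1) ∈ Γ)
        (fun a b ha hb => Γ.mul_mem ha hb) (fun a ha => Γ.inv_mem ha)
        (fun x => by obtain ⟨g, hg, e⟩ := S3 x; exact ⟨(g.2.2, g.1, g.2.1), hg, e⟩)
        (fun x => by obtain ⟨g, hg, e⟩ := S1 x; exact ⟨(g.2.2, g.1, g.2.1), hg, e⟩)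
        (fun g' hp ha hb => L12 _ hp ha hb)
        (fun g' hp ha hb => L23 _ hp hb ha)
        (fun g' hp ha hb => L13 _ hp hb ha)
        (g.2.2, g.1, g.2.1) hg hg22)
    · exact rot_of_ne_sr _ (key2 (d4 h₃ hn) (d2 h₂)
        (fun x : DihedralGroup n₃ × DihedralGroup n₂ × DihedralGroup n₁ =>
          (x.2.2, x.2.1, x.1) ∈ Γ)
        (fun a b ha hb => Γ.mul_mem ha hb) (fun a ha => Γ.inv_mem ha)
        (fun x => by obtain ⟨g, hg, e⟩ := S3 x; exact ⟨(g.2.2, g.2.1, g.1), hg, e⟩)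
        (fun x => by obtain ⟨g, hg, e⟩ := S2 x; exact ⟨(g.2.2, g.2.1, g.1), hg, e⟩)
        (fun g' hp ha hb => L12 _ hp hb ha)
        (fun g' hp ha hb => L13 _ hp hb ha)
        (fun g' hp ha hb => L23 _ hp hb ha)
        (g.2.2, g.2.1, g.1) hg hg22)
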